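/- The map φ (sending a word α over Ñ∖{0} to (−1)^{ℓ_ε(α)} ᾱ if α's first entry is a positive integer or α is empty, and to 0 otherwise) is a surjective algebra homomorphism from the quasi-shuffle algebra of words over Ñ∖{0} to the quasi-shuffle algebra of words over the positive integers. -/

import Mathlib

/-- The quasi-shuffle product of two words over a commutative monoid `B`,
valued in the free `k`-module on words:
`∅*α = α*∅ = α` and `(a,α)*(b,β) = (a, α*(b,β)) + (b, (a,α)*β) + (a+b, α*β)`. -/
noncomputable def qs (k : Type*) [CommRing k] {B : Type*} [AddCommMonoid B] :
    List B → List B → (List B →₀ k)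
  | [], β => Finsupp.single β 1
  | α, [] => Finsupp.single α 1
  | a :: α, b :: β =>
      Finsupp.mapDomain (List.cons a) (qs k α (b :: β)) +
      Finsupp.mapDomain (List.cons b) (qs k (a :: α) β) +
      Finsupp.mapDomain (List.cons (a + b)) (qs k α β)
  termination_by α β => α.length + β.length

/-- The bilinear extension of the quasi-shuffle product to the free module. -/
noncomputable def qsMul {k : Type*} [CommRing k] {B : Type*} [AddCommMonoid B]
    (f g : List B →₀ k) : List B →₀ k :=
  f.sum fun α c => g.sum fun β d => (c * d) • qs k α β

/-- The map `φ` on words over the monoid `Ñ∖{0}` (identified with `(ℕ,+)` via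
the isomorphism `θ` sending `ε` to `0`, so that `ε`-entries are `0`-entries):
`φ(α) = (−1)^{ℓ_ε(α)} ᾱ` if `α` is empty or its first entry is a positive
integer, and `φ(α) = 0` if the first entry is `ε`; here `ℓ_ε(α)` is the number
of `ε`-entries and `ᾱ` deletes all `ε`-entries (yielding a word over `ℙ`). -/
noncomputable def phi (k : Type*) [CommRing k] (α : List ℕ) : List ℕ →₀ k :=
  if α.head? = some 0 then 0
  else (-1 : k) ^ (α.count 0) • Finsupp.single (α.filter (· ≠ 0)) 1

/-- The linear extension of `φ` to the free module on words. -/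
noncomputable def phiHom (k : Type*) [CommRing k] (f : List ℕ →₀ k) : List ℕ →₀ k :=
  f.sum fun α c => c • phi k α

section Aux

variable (k : Type*) [CommRing k]

lemma qs_nil_left (β : List ℕ) : qs k [] β = Finsupp.single β 1 := by rw [qs]

lemma qs_nil_right (α : List ℕ) : qs k α [] = Finsupp.single α 1 := by
  cases α with
  | nil => rw [qs]
  | cons a α => rw [qs] <;> simp

lemma qs_cons_cons (a b : ℕ) (α β : List ℕ) : qs k (a::α) (b::β) =
      Finsupp.mapDomain (List.cons a) (qs k α (b :: β)) +
      Finsupp.mapDomain (List.cons b) (qs k (a :: α) β) +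
      Finsupp.mapDomain (List.cons (a + b)) (qs k α β) := by rw [qs]

/-- unsigned version of `phi` -/
noncomputable def psi (α : List ℕ) : List ℕ →₀ k :=
  (-1 : k) ^ (α.count 0) • Finsupp.single (α.filter (· ≠ 0)) 1

noncomputable def psiL : (List ℕ →₀ k) →ₗ[k] (List ℕ →₀ k) :=
  Finsupp.lsum k fun α => LinearMap.toSpanSingleton k _ (psi k α)

noncomputable def phiL : (List ℕ →₀ k) →ₗ[k] (List ℕ →₀ k) :=
  Finsupp.lsum k fun α => LinearMap.toSpanSingleton k _ (phi k α)

lemma phiHom_eq (f : List ℕ →₀ k) : phiHom k f = phiL k f := rfl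

lemma psiL_single (α : List ℕ) (c : k) :
    psiL k (Finsupp.single α c) = c • psi k α := by
  simp [psiL]

lemma phiL_single (α : List ℕ) (c : k) :
    phiL k (Finsupp.single α c) = c • phi k α := by
  simp [phiL]

lemma count0_cons_zero (β : List ℕ) : (0 :: β).count 0 = β.count 0 + 1 := by
  simp [List.count_cons]

lemma count0_cons_pos {b : ℕ} (hb : b ≠ 0) (β : List ℕ) :
    (b :: β).count 0 = β.count 0 := by
  simp [List.count_cons, hb]

lemma filter_cons_zero (β : List ℕ) :
    (0 :: β).filter (· ≠ 0) = β.filter (· ≠ 0) := by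
  simp [List.filter_cons]

lemma filter_cons_pos {b : ℕ} (hb : b ≠ 0) (β : List ℕ) :
    (b :: β).filter (· ≠ 0) = b :: β.filter (· ≠ 0) := by
  simp [List.filter_cons, hb]

lemma psi_cons (a : ℕ) (α : List ℕ) :
    psi k (a :: α) =
      if a = 0 then - psi k α else Finsupp.mapDomain (List.cons a) (psi k α) := by
  by_cases h : a = 0
  · subst h
    rw [if_pos rfl]
    simp only [psi, count0_cons_zero, filter_cons_zero, pow_succ]
    rw [mul_comm, mul_smul]
    simp
  · rw [if_neg h]
    simp only [psi, count0_cons_pos h, filter_cons_pos h]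
    rw [Finsupp.mapDomain_smul, Finsupp.mapDomain_single]

lemma phi_cons (a : ℕ) (α : List ℕ) :
    phi k (a :: α) =
      if a = 0 then 0 else Finsupp.mapDomain (List.cons a) (psi k α) := by
  by_cases h : a = 0
  · subst h; simp [phi]
  · rw [if_neg h]
    have h1 : phi k (a :: α) = psi k (a :: α) := by
      simp only [phi, psi, List.head?_cons]
      simp [h]
    rw [h1, psi_cons, if_neg h]

lemma psiL_mapDomain_cons (a : ℕ) (f : List ℕ →₀ k) :
    psiL k (Finsupp.mapDomain (List.cons a) f) =
      if a = 0 then - psiL k f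
      else Finsupp.mapDomain (List.cons a) (psiL k f) := by
  induction f using Finsupp.induction_linear with
  | zero => split <;> simp
  | add f g hf hg =>
      rw [Finsupp.mapDomain_add, map_add, hf, hg, map_add, Finsupp.mapDomain_add]
      split <;> abel
  | single α c =>
      rw [Finsupp.mapDomain_single, psiL_single, psiL_single, psi_cons]
      split <;> simp [Finsupp.mapDomain_smul]

lemma phiL_mapDomain_cons (a : ℕ) (f : List ℕ →₀ k) :
    phiL k (Finsupp.mapDomain (List.cons a) f) =
      if a = 0 then 0
      else Finsupp.mapDomain (List.cons a) (psiL k f) := by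
  induction f using Finsupp.induction_linear with
  | zero => split <;> simp
  | add f g hf hg =>
      rw [Finsupp.mapDomain_add, map_add, hf, hg, map_add, Finsupp.mapDomain_add]
      split <;> abel
  | single α c =>
      rw [Finsupp.mapDomain_single, phiL_single, psiL_single, phi_cons]
      split <;> simp [Finsupp.mapDomain_smul]

/-- The master lemma: `ψ(α * β) = (−1)^{ℓ₀(α)+ℓ₀(β)} ᾱ * β̄`. -/
lemma psiL_qs (α β : List ℕ) :
    psiL k (qs k α β) =
      ((-1 : k) ^ (α.count 0 + β.count 0)) •
        qs k (α.filter (· ≠ 0)) (β.filter (· ≠ 0)) := by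
  match α, β with
  | [], β =>
      rw [qs_nil_left, psiL_single, one_smul]
      simp only [List.filter_nil, List.count_nil, zero_add, qs_nil_left]
      rfl
  | a :: α, [] =>
      rw [qs_nil_right, psiL_single, one_smul]
      simp only [List.filter_nil, List.count_nil, add_zero, qs_nil_right]
      rfl
  | a :: α, b :: β =>
      rw [qs_cons_cons, map_add, map_add,
        psiL_mapDomain_cons, psiL_mapDomain_cons, psiL_mapDomain_cons,
        psiL_qs α (b :: β), psiL_qs (a :: α) β, psiL_qs α β]
      by_cases ha : a = 0 <;> by_cases hb : b = 0
      · subst ha; subst hb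
        rw [if_pos rfl, if_pos rfl, if_pos rfl,
          count0_cons_zero, count0_cons_zero, filter_cons_zero, filter_cons_zero]
        simp only [pow_succ, pow_add]
        module
      · subst ha
        simp only [Nat.zero_add]
        rw [if_pos trivial, if_neg hb, if_neg hb,
          count0_cons_zero, count0_cons_pos hb, filter_cons_zero,
          filter_cons_pos hb, Finsupp.mapDomain_smul, Finsupp.mapDomain_smul]
        simp only [zero_add, pow_succ, pow_add]
        module
      · subst hb
        simp only [Nat.add_zero]
        rw [if_neg ha, if_pos trivial, if_neg ha,
          count0_cons_pos ha, count0_cons_zero, filter_cons_pos ha,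
          filter_cons_zero, Finsupp.mapDomain_smul, Finsupp.mapDomain_smul]
        simp only [add_zero, pow_succ, pow_add]
        module
      · have hab : a + b ≠ 0 := by omega
        rw [if_neg ha, if_neg hb, if_neg hab,
          count0_cons_pos ha, count0_cons_pos hb,
          filter_cons_pos ha, filter_cons_pos hb,
          Finsupp.mapDomain_smul, Finsupp.mapDomain_smul, Finsupp.mapDomain_smul,
          qs_cons_cons]
        module
  termination_by (α.length + β.length)

lemma qsMul_single_single (α β : List ℕ) (c d : k) :
    qsMul (Finsupp.single α c) (Finsupp.single β d) = (c * d) • qs k α β := by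
  unfold qsMul
  rw [Finsupp.sum_single_index (by simp), Finsupp.sum_single_index (by simp)]

lemma qsMul_zero_left (g : List ℕ →₀ k) : qsMul 0 g = 0 := by
  unfold qsMul; exact Finsupp.sum_zero_index

lemma qsMul_zero_right (f : List ℕ →₀ k) : qsMul f (0 : List ℕ →₀ k) = 0 := by
  unfold qsMul
  simp [Finsupp.sum_zero_index]

lemma qsMul_add_left (f₁ f₂ g : List ℕ →₀ k) :
    qsMul (f₁ + f₂) g = qsMul f₁ g + qsMul f₂ g := by
  unfold qsMul
  rw [Finsupp.sum_add_index]
  · intro α _; simp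
  · intro α _ c₁ c₂
    rw [← Finsupp.sum_add]
    refine Finsupp.sum_congr fun β _ => ?_
    rw [add_mul, add_smul]

lemma qsMul_add_right (f g₁ g₂ : List ℕ →₀ k) :
    qsMul f (g₁ + g₂) = qsMul f g₁ + qsMul f g₂ := by
  unfold qsMul
  rw [← Finsupp.sum_add]
  refine Finsupp.sum_congr fun α _ => ?_
  rw [Finsupp.sum_add_index (fun β _ => by simp)
    (fun β _ d₁ d₂ => by rw [mul_add, add_smul])]

lemma qsMul_smul_left (c : k) (f g : List ℕ →₀ k) :
    qsMul (c • f) g = c • qsMul f g := by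
  unfold qsMul
  rw [Finsupp.sum_smul_index (fun i => by simp), Finsupp.smul_sum]
  refine Finsupp.sum_congr fun α _ => ?_
  rw [Finsupp.smul_sum]
  refine Finsupp.sum_congr fun β _ => ?_
  rw [smul_smul, mul_assoc]

lemma qsMul_smul_right (c : k) (f g : List ℕ →₀ k) :
    qsMul f (c • g) = c • qsMul f g := by
  unfold qsMul
  rw [Finsupp.smul_sum]
  refine Finsupp.sum_congr fun α _ => ?_
  rw [Finsupp.sum_smul_index (fun i => by simp), Finsupp.smul_sum]
  refine Finsupp.sum_congr fun β _ => ?_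
  rw [mul_left_comm, mul_smul]

lemma qsMul_one_left (f : List ℕ →₀ k) :
    qsMul (Finsupp.single ([] : List ℕ) (1 : k)) f = f := by
  unfold qsMul
  rw [Finsupp.sum_single_index (by simp)]
  simp only [one_mul, qs_nil_left, Finsupp.smul_single, smul_eq_mul, mul_one]
  exact Finsupp.sum_single f

lemma qsMul_one_right (f : List ℕ →₀ k) :
    qsMul f (Finsupp.single ([] : List ℕ) (1 : k)) = f := by
  unfold qsMul
  have h : (f.sum fun α c => (Finsupp.single ([] : List ℕ) (1:k)).sum
      fun β d => (c * d) • qs k α β) = f.sum fun α c => Finsupp.single α c := by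
    refine Finsupp.sum_congr fun α _ => ?_
    rw [Finsupp.sum_single_index (by simp), mul_one, qs_nil_right,
      Finsupp.smul_single, smul_eq_mul, mul_one]
  rw [h, Finsupp.sum_single]

lemma phi_nil : phi k ([] : List ℕ) = Finsupp.single ([] : List ℕ) (1 : k) := by
  simp [phi]

lemma phi_pos (l : List ℕ) (hl : ∀ x ∈ l, 0 < x) :
    phi k l = Finsupp.single l (1 : k) := by
  have h1 : ¬ l.head? = some 0 := by
    cases l with
    | nil => simp
    | cons x l =>
        have := hl x (List.mem_cons_self)
        simp only [List.head?_cons, Option.some.injEq]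
        omega
  rw [phi, if_neg h1]
  have h2 : l.count 0 = 0 := by
    rw [List.count_eq_zero]
    intro h
    exact absurd (hl 0 h) (by omega)
  have h3 : l.filter (· ≠ 0) = l := by
    rw [List.filter_eq_self]
    intro x hx
    have := hl x hx
    simp; omega
  rw [h2, h3, pow_zero, one_smul]

/-- The key homomorphism identity on words. -/
lemma phiL_qs (α β : List ℕ) :
    phiL k (qs k α β) = qsMul (phi k α) (phi k β) := by
  match α, β with
  | [], β =>
      rw [qs_nil_left, phiL_single, one_smul, phi_nil, qsMul_one_left]
  | a :: α, [] =>
      rw [qs_nil_right, phiL_single, one_smul, phi_nil, qsMul_one_right]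
  | a :: α, b :: β =>
      rw [qs_cons_cons, map_add, map_add,
        phiL_mapDomain_cons, phiL_mapDomain_cons, phiL_mapDomain_cons,
        psiL_qs, psiL_qs, psiL_qs, phi_cons, phi_cons]
      by_cases ha : a = 0 <;> by_cases hb : b = 0
      · subst ha; subst hb
        simp only [if_pos trivial, if_pos rfl]
        rw [qsMul_zero_left]
        abel
      · subst ha
        simp only [Nat.zero_add, if_pos trivial, if_neg hb, if_pos rfl]
        rw [qsMul_zero_left, filter_cons_zero, count0_cons_zero]
        simp only [Finsupp.mapDomain_smul, pow_succ, pow_add]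
        module
      · subst hb
        simp only [Nat.add_zero, if_pos trivial, if_neg ha, if_pos rfl]
        rw [qsMul_zero_right, filter_cons_zero, count0_cons_zero]
        simp only [Finsupp.mapDomain_smul, pow_succ, pow_add]
        module
      · have hab : a + b ≠ 0 := by omega
        rw [if_neg ha, if_neg hb, if_neg hab, if_neg ha, if_neg hb,
          count0_cons_pos ha, count0_cons_pos hb,
          filter_cons_pos ha, filter_cons_pos hb]
        unfold psi
        simp only [Finsupp.mapDomain_smul, Finsupp.mapDomain_single]
        rw [qsMul_smul_left, qsMul_smul_right, qsMul_single_single, one_mul,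
          qs_cons_cons]
        simp only [Finsupp.mapDomain_smul, pow_add]
        module

lemma phiL_qsMul (f g : List ℕ →₀ k) :
    phiL k (qsMul f g) = qsMul (phiL k f) (phiL k g) := by
  induction f using Finsupp.induction_linear with
  | zero => rw [qsMul_zero_left, map_zero, qsMul_zero_left]
  | add f₁ f₂ h₁ h₂ =>
      rw [qsMul_add_left, map_add, h₁, h₂, map_add, qsMul_add_left]
  | single α c =>
      induction g using Finsupp.induction_linear with
      | zero => rw [qsMul_zero_right, map_zero, qsMul_zero_right]
      | add g₁ g₂ h₁ h₂ =>
          rw [qsMul_add_right, map_add, h₁, h₂, map_add, qsMul_add_right]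
      | single β d =>
          rw [qsMul_single_single, map_smul, phiL_qs, phiL_single, phiL_single,
            qsMul_smul_left, qsMul_smul_right, smul_smul]

end Aux

/-- `φ` is a surjective algebra homomorphism from the quasi-shuffle algebra of
words over `Ñ∖{0}` to the quasi-shuffle algebra of words over the positive
integers (the span of words all of whose entries are positive): it is unital,
multiplicative, and its range is exactly that span. -/
theorem stmt_18 (k : Type*) [CommRing k] :
    phiHom k (Finsupp.single [] 1) = Finsupp.single ([] : List ℕ) (1 : k) ∧
    (∀ f g : List ℕ →₀ k, phiHom k (qsMul f g) = qsMul (phiHom k f) (phiHom k g)) ∧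
    Set.range (phiHom k) =
      (Submodule.span k {h : List ℕ →₀ k |
        ∃ l : List ℕ, (∀ x ∈ l, 0 < x) ∧ h = Finsupp.single l 1} : Set (List ℕ →₀ k)) := by
  refine ⟨?_, ?_, ?_⟩
  · rw [phiHom_eq, phiL_single, one_smul, phi_nil]
  · intro f g
    rw [phiHom_eq, phiHom_eq, phiHom_eq, phiL_qsMul]
  · apply le_antisymm
    · rintro x ⟨f, rfl⟩
      rw [phiHom_eq]
      have : phiL k f = f.sum fun α c => c • phi k α := rfl
      rw [this]
      apply Submodule.sum_mem
      intro α _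
      apply Submodule.smul_mem
      by_cases h : α.head? = some 0
      · rw [phi, if_pos h]
        exact Submodule.zero_mem _
      · rw [phi, if_neg h]
        apply Submodule.smul_mem
        apply Submodule.subset_span
        refine ⟨α.filter (· ≠ 0), fun x hx => ?_, rfl⟩
        have := List.of_mem_filter hx
        simp only [ne_eq, decide_not, Bool.not_eq_true', decide_eq_false_iff_not] at this
        omega
    · intro x hx
      have h2 : (Submodule.span k {h : List ℕ →₀ k |
          ∃ l : List ℕ, (∀ x ∈ l, 0 < x) ∧ h = Finsupp.single l 1}) ≤
          LinearMap.range (phiL k) := by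
        rw [Submodule.span_le]
        rintro y ⟨l, hl, rfl⟩
        exact ⟨Finsupp.single l 1, by rw [phiL_single, one_smul, phi_pos k l hl]⟩
      obtain ⟨f, hf⟩ := h2 hx
      exact ⟨f, by rw [phiHom_eq, hf]⟩
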